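/- Let n ≥ 1, let U be a 2^n × 2^n unitary matrix, let 0 ≤ α ≤ 1, and let ρ_DQC1 = 2^{−(n+1)} · [[I_{2^n}, α U†],[α U, I_{2^n}]]. Then for every 2^{n+1} × 2^{n+1} unitary matrix V, (1/√2)·‖ρ_DQC1 − V ρ_DQC1 V†‖_F ≤ α/2^{n/2}. In particular the maximal LNU distance of the DQC1 state, across any bipartition, is at most α/2^{n/2}, which vanishes exponentially in n. -/
import Mathlib


open Matrix

/-- The DQC1 state on n+1 qubits determined by a 2ⁿ×2ⁿ unitary U and
polarization α: ρ = 2^{-(n+1)} · fromBlocks(I, αUᴴ, αU, I). -/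
noncomputable def dqc1State (n : ℕ) (α : ℝ) (U : Matrix (Fin (2 ^ n)) (Fin (2 ^ n)) ℂ) :
    Matrix (Fin (2 ^ n) ⊕ Fin (2 ^ n)) (Fin (2 ^ n) ⊕ Fin (2 ^ n)) ℂ :=
  ((2 : ℂ) ^ (n + 1))⁻¹ • Matrix.fromBlocks 1 ((α : ℂ) • Uᴴ) ((α : ℂ) • U) 1

/-- The Frobenius norm of a complex matrix: `‖A‖_F = √(Tr(AᴴA))`. -/
noncomputable def frobNorm {n : Type*} [Fintype n] (A : Matrix n n ℂ) : ℝ :=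
  Real.sqrt ((Aᴴ * A).trace.re)

attribute [local instance] Matrix.frobeniusNormedAddCommGroup Matrix.frobeniusNormedSpace

lemma trace_re_eq {n : Type*} [Fintype n] (A : Matrix n n ℂ) :
    (Aᴴ * A).trace.re = ∑ i, ∑ j, ‖A i j‖ ^ (2 : ℝ) := by
  rw [Matrix.trace]
  simp only [Matrix.diag, Matrix.mul_apply, Matrix.conjTranspose_apply, Complex.star_def]
  rw [Finset.sum_comm, Complex.re_sum]
  refine Finset.sum_congr rfl fun i _ => ?_
  rw [Complex.re_sum]
  refine Finset.sum_congr rfl fun j _ => ?_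
  rw [mul_comm, Complex.mul_conj', show (2:ℝ) = ((2:ℕ):ℝ) by norm_num, Real.rpow_natCast,
    ← Complex.ofReal_pow, Complex.ofReal_re]

lemma frobNorm_eq_norm {n : Type*} [Fintype n] (A : Matrix n n ℂ) :
    frobNorm A = ‖A‖ := by
  rw [frobNorm, Matrix.frobenius_norm_def, trace_re_eq, Real.sqrt_eq_rpow]

lemma frobNorm_unitary_conj {n : Type*} [Fintype n] [DecidableEq n]
    (A V : Matrix n n ℂ) (hV : V ∈ Matrix.unitaryGroup n ℂ) :
    frobNorm (V * A * Vᴴ) = frobNorm A := by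
  have h1 : Vᴴ * V = 1 := by
    simpa [Matrix.star_eq_conjTranspose] using (Matrix.mem_unitaryGroup_iff'.mp hV)
  unfold frobNorm
  congr 1
  have key : (V * A * Vᴴ)ᴴ * (V * A * Vᴴ) = V * (Aᴴ * A) * Vᴴ := by
    simp only [Matrix.conjTranspose_mul, Matrix.conjTranspose_conjTranspose, Matrix.mul_assoc]
    rw [← Matrix.mul_assoc Vᴴ V, h1, Matrix.one_mul]
  rw [key, Matrix.trace_mul_comm, ← Matrix.mul_assoc, h1, Matrix.one_mul]


/-- For every unitary V on the full 2^{n+1}-dimensional space, the LNU distance of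
the DQC1 state under V is at most α/2^{n/2}; in particular the maximal LNU distance
of the DQC1 state across any bipartition vanishes exponentially in n. -/
theorem dqc1_lnu_distance_bound (n : ℕ) (hn : 1 ≤ n) (α : ℝ) (hα0 : 0 ≤ α) (hα1 : α ≤ 1)
    (U : Matrix (Fin (2 ^ n)) (Fin (2 ^ n)) ℂ)
    (hU : U ∈ Matrix.unitaryGroup (Fin (2 ^ n)) ℂ)
    (V : Matrix (Fin (2 ^ n) ⊕ Fin (2 ^ n)) (Fin (2 ^ n) ⊕ Fin (2 ^ n)) ℂ)
    (hV : V ∈ Matrix.unitaryGroup (Fin (2 ^ n) ⊕ Fin (2 ^ n)) ℂ) :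
    (1 / Real.sqrt 2) * frobNorm (dqc1State n α U - V * dqc1State n α U * Vᴴ)
      ≤ α / Real.sqrt (2 ^ n) := by
  set X : Matrix (Fin (2 ^ n) ⊕ Fin (2 ^ n)) (Fin (2 ^ n) ⊕ Fin (2 ^ n)) ℂ :=
    Matrix.fromBlocks 0 Uᴴ U 0 with hX
  have hU1 : Uᴴ * U = 1 := by
    simpa [Matrix.star_eq_conjTranspose] using (Matrix.mem_unitaryGroup_iff'.mp hU)
  have hU2 : U * Uᴴ = 1 := by
    simpa [Matrix.star_eq_conjTranspose] using (Matrix.mem_unitaryGroup_iff.mp hU)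
  have hV2 : V * Vᴴ = 1 := by
    simpa [Matrix.star_eq_conjTranspose] using (Matrix.mem_unitaryGroup_iff.mp hV)
  -- decomposition of the state
  have hρ : dqc1State n α U = ((2 : ℂ) ^ (n + 1))⁻¹ • (1 + (α : ℂ) • X) := by
    rw [dqc1State, hX]
    congr 1
    rw [Matrix.fromBlocks_smul, ← Matrix.fromBlocks_one, Matrix.fromBlocks_add]
    simp
  have hmid : V * (1 + (α : ℂ) • X) * Vᴴ = 1 + (α : ℂ) • (V * X * Vᴴ) := by
    simp only [Matrix.mul_add, Matrix.add_mul, Matrix.mul_one, Matrix.mul_smul,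
      Matrix.smul_mul, hV2]
  have hdiff : dqc1State n α U - V * dqc1State n α U * Vᴴ
      = (((2 : ℂ) ^ (n + 1))⁻¹ * (α : ℂ)) • (X - V * X * Vᴴ) := by
    rw [hρ, Matrix.mul_smul, Matrix.smul_mul, hmid, ← smul_sub,
      add_sub_add_left_eq_sub, ← smul_sub, smul_smul]
  -- norm of X
  have hXX : Xᴴ * X = 1 := by
    rw [hX, Matrix.fromBlocks_conjTranspose, Matrix.fromBlocks_multiply]
    simp [hU1, hU2, Matrix.fromBlocks_one]
  have hfX : frobNorm X = Real.sqrt (2 ^ (n + 1)) := by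
    rw [frobNorm, hXX]
    congr 1
    rw [Matrix.trace_one, Complex.natCast_re]
    simp [Fintype.card_sum]
    ring
  have hfVX : frobNorm (V * X * Vᴴ) = Real.sqrt (2 ^ (n + 1)) := by
    rw [frobNorm_unitary_conj X V hV, hfX]
  -- scalar norm
  have hc : ‖((2 : ℂ) ^ (n + 1))⁻¹ * (α : ℂ)‖ = α / 2 ^ (n + 1) := by
    rw [norm_mul, norm_inv, norm_pow, Complex.norm_ofNat, Complex.norm_real,
      Real.norm_of_nonneg hα0]
    ring
  have htri : frobNorm (X - V * X * Vᴴ) ≤ 2 * Real.sqrt (2 ^ (n + 1)) := by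
    rw [frobNorm_eq_norm]
    calc ‖X - V * X * Vᴴ‖ ≤ ‖X‖ + ‖V * X * Vᴴ‖ := norm_sub_le _ _
      _ = 2 * Real.sqrt (2 ^ (n + 1)) := by
          rw [← frobNorm_eq_norm, ← frobNorm_eq_norm, hfX, hfVX]; ring
  have hs : Real.sqrt (2 ^ n) > 0 := Real.sqrt_pos.mpr (by positivity)
  calc (1 / Real.sqrt 2) * frobNorm (dqc1State n α U - V * dqc1State n α U * Vᴴ)
      = (1 / Real.sqrt 2) * ((α / 2 ^ (n + 1)) * frobNorm (X - V * X * Vᴴ)) := by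
        rw [hdiff, frobNorm_eq_norm, norm_smul, hc, frobNorm_eq_norm]
    _ ≤ (1 / Real.sqrt 2) * ((α / 2 ^ (n + 1)) * (2 * Real.sqrt (2 ^ (n + 1)))) := by
        have h2 : (0:ℝ) < Real.sqrt 2 := Real.sqrt_pos.mpr (by norm_num)
        gcongr
    _ = α / Real.sqrt (2 ^ n) := by
        have e1 : Real.sqrt ((2:ℝ) ^ (n + 1)) = Real.sqrt 2 * Real.sqrt (2 ^ n) := by
          rw [pow_succ, mul_comm, Real.sqrt_mul (by positivity)]
        have e2 : Real.sqrt (2 ^ n) * Real.sqrt (2 ^ n) = 2 ^ n := by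
          rw [Real.mul_self_sqrt (by positivity)]
        have h2 : (0:ℝ) < Real.sqrt 2 := Real.sqrt_pos.mpr (by norm_num)
        rw [e1]
        field_simp
        ring_nf
        rw [Real.sq_sqrt (by positivity : (0:ℝ) ≤ 2 ^ n)]
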